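/- arXiv:1808.03053 — 5 statements merged into one kernel-verified Lean document; each statement's English description precedes it below -/
import Mathlib

section
/- For any closed Euclidean ball B ⊂ R^n whose set of integer points B ∩ Z^n is nonempty, the set B ∩ Z^n is (n−1)-connected. -/
noncomputable section

/-- Embedding of an integer point into Euclidean `n`-space. -/
def toE (n : ℕ) (p : Fin n → ℤ) : EuclideanSpace ℝ (Fin n) := WithLp.toLp 2 (fun i => (p i : ℝ))

/-- Two integer points are `k`-adjacent iff they are distinct, all coordinates differ
by at most 1, and at most `n - k` coordinates differ. -/
def kAdj (n k : ℕ) (p q : Fin n → ℤ) : Prop :=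
  p ≠ q ∧ (∀ i, |p i - q i| ≤ 1) ∧
    (Finset.univ.filter (fun i => p i ≠ q i)).card ≤ n - k

/-- A set of integer points is `k`-connected iff any two of its points are joined by a
path inside the set whose consecutive points are `k`-adjacent. -/
def kConn (n k : ℕ) (S : Set (Fin n → ℤ)) : Prop :=
  ∀ p ∈ S, ∀ q ∈ S,
    Relation.ReflTransGen (fun a b => a ∈ S ∧ b ∈ S ∧ kAdj n k a b) p q

/-- The closed `r`-offset (closed `r`-neighborhood) of `X`. -/
def offset (n : ℕ) (X : Set (EuclideanSpace ℝ (Fin n))) (r : ℝ) :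
    Set (EuclideanSpace ℝ (Fin n)) := ⋃ x ∈ X, Metric.closedBall x r

/-- The `r`-offset discretization of `X`: the integer points in the `r`-offset. -/
def disc (n : ℕ) (X : Set (EuclideanSpace ℝ (Fin n))) (r : ℝ) :
    Set (Fin n → ℤ) := {p | toE n p ∈ offset n X r}

-- ball membership from coordinatewise domination
lemma mem_ball_of_coord_le {n : ℕ} {x : EuclideanSpace ℝ (Fin n)} {r : ℝ}
    {a b : Fin n → ℤ} (h : ∀ i, |(a i : ℝ) - x i| ≤ |(b i : ℝ) - x i|)
    (hb : toE n b ∈ Metric.closedBall x r) : toE n a ∈ Metric.closedBall x r := by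
  rw [Metric.mem_closedBall] at *
  refine le_trans ?_ hb
  rw [EuclideanSpace.dist_eq, EuclideanSpace.dist_eq]
  apply Real.sqrt_le_sqrt
  apply Finset.sum_le_sum
  intro i _
  have := h i
  simp only [toE, Real.dist_eq]
  have h1 : |(a i : ℝ) - x i| ^ 2 ≤ |(b i : ℝ) - x i| ^ 2 :=
    pow_le_pow_left₀ (abs_nonneg _) this 2
  simpa [sq_abs] using h1

-- one step toward round t doesn't increase distance to t
lemma step_le (t : ℝ) (m : ℤ) (hgt : round t < m) :
    |((m - 1 : ℤ) : ℝ) - t| ≤ |(m : ℝ) - t| := by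
  have h1 : |t - (round t : ℝ)| ≤ 1/2 := abs_sub_round t
  rw [abs_le] at h1
  have h2 : ((round t : ℤ) : ℝ) + 1 ≤ (m : ℝ) := by exact_mod_cast hgt
  have hm : (1:ℝ)/2 ≤ (m : ℝ) - t := by linarith
  rw [abs_of_nonneg (by linarith : (0:ℝ) ≤ (m:ℝ) - t)]
  rw [abs_le]
  push_cast
  constructor <;> linarith

lemma step_le' (t : ℝ) (m : ℤ) (hlt : m < round t) :
    |((m + 1 : ℤ) : ℝ) - t| ≤ |(m : ℝ) - t| := by
  have h1 : |t - (round t : ℝ)| ≤ 1/2 := abs_sub_round t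
  rw [abs_le] at h1
  have h2 : (m : ℝ) + 1 ≤ ((round t : ℤ) : ℝ) := by exact_mod_cast hlt
  have hm : (1:ℝ)/2 ≤ t - (m : ℝ) := by linarith
  rw [abs_of_nonpos (by linarith : (m:ℝ) - t ≤ 0), abs_le]
  push_cast
  constructor <;> linarith

/-- For a closed Euclidean ball `B` in `ℝ^n`, if `B ∩ ℤ^n` is nonempty then it is
`(n-1)`-connected. -/
theorem closedBall_lattice_points_conn (n : ℕ) (x : EuclideanSpace ℝ (Fin n)) (r : ℝ)
    (hne : {p : Fin n → ℤ | toE n p ∈ Metric.closedBall x r}.Nonempty) :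
    kConn n (n - 1) {p : Fin n → ℤ | toE n p ∈ Metric.closedBall x r} := by
  set S : Set (Fin n → ℤ) := {p : Fin n → ℤ | toE n p ∈ Metric.closedBall x r} with hS
  set c : Fin n → ℤ := fun i => round (x i) with hc
  set rel : (Fin n → ℤ) → (Fin n → ℤ) → Prop :=
    fun a b => a ∈ S ∧ b ∈ S ∧ kAdj n (n-1) a b with hrel
  obtain ⟨p0, hp0⟩ := hne
  have hcS : c ∈ S := by
    refine mem_ball_of_coord_le (fun i => ?_) hp0
    have := round_le (x i) (p0 i)
    rw [abs_sub_comm (x i), abs_sub_comm (x i)] at this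
    exact this
  -- every point of S reaches c
  have reach : ∀ N : ℕ, ∀ p, p ∈ S → (∑ i, (p i - c i).natAbs) ≤ N →
      Relation.ReflTransGen rel p c := by
    intro N
    induction N with
    | zero =>
      intro p hp hsum
      have : p = c := by
        funext i
        have h0 : (p i - c i).natAbs = 0 := by
          have := Finset.sum_eq_zero_iff.mp (Nat.le_zero.mp hsum) i (Finset.mem_univ i)
          exact this
        omega
      rw [this]
    | succ N ih =>
      intro p hp hsum
      by_cases hpc : p = c
      · rw [hpc]
      · have : ∃ j, p j ≠ c j := by
          by_contra h
          push_neg at h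
          exact hpc (funext h)
        obtain ⟨j, hj⟩ := this
        set m' : ℤ := if c j < p j then p j - 1 else p j + 1 with hm'
        set p' : Fin n → ℤ := Function.update p j m' with hp'
        have hcoord : ∀ i, |(p' i : ℝ) - x i| ≤ |(p i : ℝ) - x i| := by
          intro i
          by_cases hij : i = j
          · subst hij
            simp only [hp', Function.update_self, hm']
            by_cases hlt : c i < p i
            · simp only [if_pos hlt]
              exact step_le (x i) (p i) (by simpa [hc] using hlt)
            · simp only [if_neg hlt]
              have : p i < c i := lt_of_le_of_ne (not_lt.mp hlt) hj
              exact step_le' (x i) (p i) (by simpa [hc] using this)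
          · simp [hp', Function.update_of_ne hij]
        have hp'S : p' ∈ S := mem_ball_of_coord_le hcoord hp
        have hdiff : ∀ i, i ≠ j → p' i = p i := fun i hij =>
          Function.update_of_ne hij _ _
        have hpj : p' j = m' := Function.update_self _ _ _
        have hmne : m' ≠ p j := by
          by_cases hlt : c j < p j <;> simp [hm', hlt] <;> omega
        have hadj : kAdj n (n-1) p p' := by
          refine ⟨?_, ?_, ?_⟩
          · intro h
            exact hmne (by rw [← hpj, ← h])
          · intro i
            by_cases hij : i = j
            · subst hij
              rw [hpj]
              by_cases hlt : c i < p i <;> simp [hm', hlt] <;> omega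
            · rw [hdiff i hij]; simp
          · have hn : 1 ≤ n := j.pos
            have hsub : (Finset.univ.filter (fun i => p i ≠ p' i)) ⊆ {j} := by
              intro i hi
              simp only [Finset.mem_filter] at hi
              simp only [Finset.mem_singleton]
              by_contra hij
              exact hi.2 (hdiff i hij).symm
            calc (Finset.univ.filter (fun i => p i ≠ p' i)).card
                ≤ ({j} : Finset (Fin n)).card := Finset.card_le_card hsub
              _ = 1 := Finset.card_singleton j
              _ ≤ n - (n-1) := by omega
        have hsum' : (∑ i, (p' i - c i).natAbs) ≤ N := by
          have key : (p' j - c j).natAbs + 1 = (p j - c j).natAbs := by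
            rw [hpj]
            by_cases hlt : c j < p j <;> simp [hm', hlt] <;> omega
          have e1 : ∑ i, (p' i - c i).natAbs
              = (p' j - c j).natAbs + ∑ i ∈ Finset.univ.erase j, (p' i - c i).natAbs :=
            (Finset.add_sum_erase _ (fun i => (p' i - c i).natAbs) (Finset.mem_univ j)).symm
          have e2 : ∑ i, (p i - c i).natAbs
              = (p j - c j).natAbs + ∑ i ∈ Finset.univ.erase j, (p i - c i).natAbs :=
            (Finset.add_sum_erase _ (fun i => (p i - c i).natAbs) (Finset.mem_univ j)).symm
          have e3 : ∑ i ∈ Finset.univ.erase j, (p' i - c i).natAbs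
              = ∑ i ∈ Finset.univ.erase j, (p i - c i).natAbs := by
            apply Finset.sum_congr rfl
            intro i hi
            rw [hdiff i (Finset.ne_of_mem_erase hi)]
          omega
        exact Relation.ReflTransGen.head ⟨hp, hp'S, hadj⟩ (ih p' hp'S hsum')
  have hsymm : Symmetric rel := by
    intro a b ⟨ha, hb, hne', habs, hcard⟩
    refine ⟨hb, ha, Ne.symm hne', fun i => by rw [abs_sub_comm]; exact habs i, ?_⟩
    have : (Finset.univ.filter (fun i => b i ≠ a i))
        = (Finset.univ.filter (fun i => a i ≠ b i)) := by
      apply Finset.filter_congr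
      intro i _
      exact ⟨Ne.symm, Ne.symm⟩
    rw [this]; exact hcard
  intro p hp q hq
  exact (reach _ p hp le_rfl).trans
    (by haveI : Std.Symm rel := ⟨fun a b h => hsymm h⟩
        exact Std.Symm.symm _ _ (reach _ q hq le_rfl))
end
end

section
/- Let X ⊂ R^n (n ≥ 2) be a disconnected set whose closure Cl(X) is connected. Then for every r > sqrt(n)/2, the r-offset discretization Δ_r(X) = U(X,r) ∩ Z^n is (n−1)-connected. -/
noncomputable section

lemma mem_disc_iff {n : ℕ} {X : Set (EuclideanSpace ℝ (Fin n))} {r : ℝ} {p : Fin n → ℤ} :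
    p ∈ disc n X r ↔ ∃ x ∈ X, dist (toE n p) x ≤ r := by
  simp [disc, offset, Metric.mem_closedBall, Set.mem_iUnion]

lemma dist_toE_le (n : ℕ) (p : Fin n → ℤ) (x : EuclideanSpace ℝ (Fin n)) (c : ℝ) (hc : 0 ≤ c)
    (h : ∀ i, |(p i : ℝ) - x i| ≤ c) : dist (toE n p) x ≤ Real.sqrt n * c := by
  rw [EuclideanSpace.dist_eq]
  have hsum : ∑ i, dist (toE n p i) (x i) ^ 2 ≤ (n : ℝ) * c ^ 2 := by
    calc ∑ i, dist (toE n p i) (x i) ^ 2 ≤ ∑ _i : Fin n, c ^ 2 := by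
          apply Finset.sum_le_sum
          intro i _
          have hi := h i
          have : dist (toE n p i) (x i) = |(p i : ℝ) - x i| := Real.dist_eq _ _
          rw [this]
          have h0 : (0:ℝ) ≤ |(p i : ℝ) - x i| := abs_nonneg _
          nlinarith
      _ = (n : ℝ) * c ^ 2 := by simp [Finset.sum_const, Finset.card_univ]
  calc Real.sqrt (∑ i, dist (toE n p i) (x i) ^ 2) ≤ Real.sqrt ((n:ℝ) * c ^ 2) :=
        Real.sqrt_le_sqrt hsum
    _ = Real.sqrt n * c := by
        rw [Real.sqrt_mul (by positivity), Real.sqrt_sq hc]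

lemma descent (n : ℕ) (x : EuclideanSpace ℝ (Fin n)) (r : ℝ)
    (q : Fin n → ℤ) (hq : ∀ i, |(q i : ℝ) - x i| ≤ 1/2) :
    ∀ (m : ℕ) (p : Fin n → ℤ), (∑ i, (p i - q i).natAbs) = m →
      dist (toE n p) x ≤ r →
      Relation.ReflTransGen
        (fun a b => dist (toE n a) x ≤ r ∧ dist (toE n b) x ≤ r ∧ kAdj n (n-1) a b) p q := by
  intro m
  induction m using Nat.strong_induction_on with
  | _ m ih =>
    intro p hm hp
    by_cases hpq : p = q
    · subst hpq; exact .refl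
    · obtain ⟨i, hi⟩ : ∃ i, p i ≠ q i := Function.ne_iff.mp hpq
      set s : ℤ := if p i < q i then 1 else -1 with hs
      set p' : Fin n → ℤ := Function.update p i (p i + s) with hp'
      have hp'i : p' i = p i + s := Function.update_self i _ p
      have hp'ne : ∀ j, j ≠ i → p' j = p j := fun j hj => Function.update_of_ne hj _ p
      have hsne : s ≠ 0 := by rw [hs]; split_ifs <;> simp
      -- distance does not increase
      have hqi := abs_le.mp (hq i)
      have hkey : dist (toE n p') x ≤ dist (toE n p) x := by
        rw [EuclideanSpace.dist_eq, EuclideanSpace.dist_eq]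
        apply Real.sqrt_le_sqrt
        apply Finset.sum_le_sum
        intro j _
        by_cases hj : j = i
        · subst hj
          rw [Real.dist_eq, Real.dist_eq, sq_abs, sq_abs]
          have hcast : (toE n p' j : ℝ) = ((p j : ℝ) + (s : ℝ)) := by
            show ((p' j : ℤ) : ℝ) = _
            rw [hp'i]; push_cast; ring
          rw [hcast]
          show ((p j : ℝ) + (s:ℝ) - x j) ^ 2 ≤ ((p j : ℝ) - x j) ^ 2
          rw [hs]
          split_ifs with hlt
          · have : (p j : ℝ) + 1 ≤ (q j : ℝ) := by exact_mod_cast hlt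
            push_cast
            nlinarith [hqi.1, hqi.2]
          · have hgt : q j < p j := lt_of_le_of_ne (not_lt.mp hlt) (Ne.symm hi)
            have : (q j : ℝ) + 1 ≤ (p j : ℝ) := by exact_mod_cast hgt
            push_cast
            nlinarith [hqi.1, hqi.2]
        · have : toE n p' j = toE n p j := by
            show ((p' j : ℤ) : ℝ) = ((p j : ℤ) : ℝ)
            rw [hp'ne j hj]
          rw [this]
      -- measure decreases
      have hmi : (p' i - q i).natAbs + 1 = (p i - q i).natAbs := by
        rw [hp'i, hs]
        split_ifs with h <;> omega
      have hsum : (∑ j, (p' j - q j).natAbs) + 1 = m := by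
        rw [← hm, ← Finset.add_sum_erase _ (fun j => (p' j - q j).natAbs) (Finset.mem_univ i),
          ← Finset.add_sum_erase _ (fun j => (p j - q j).natAbs) (Finset.mem_univ i)]
        have hrest : ∑ j ∈ Finset.univ.erase i, (p' j - q j).natAbs
            = ∑ j ∈ Finset.univ.erase i, (p j - q j).natAbs :=
          Finset.sum_congr rfl (fun j hj => by rw [hp'ne j (Finset.ne_of_mem_erase hj)])
        omega
      -- adjacency
      have hadj : kAdj n (n-1) p p' := by
        refine ⟨?_, ?_, ?_⟩
        · intro h
          have := congrFun h i
          rw [hp'i] at this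
          omega
        · intro j
          by_cases hj : j = i
          · subst hj; rw [hp'i, hs]; split_ifs <;> simp
          · rw [hp'ne j hj]; simp
        · have hfilter : Finset.univ.filter (fun j => p j ≠ p' j) = {i} := by
            ext j
            simp only [Finset.mem_filter, Finset.mem_univ, true_and, Finset.mem_singleton]
            constructor
            · intro h
              by_contra hji
              exact h (hp'ne j hji).symm
            · intro h; subst h; rw [hp'i]; omega
          rw [hfilter, Finset.card_singleton]
          have := i.pos
          omega
      have hp'd : dist (toE n p') x ≤ r := hkey.trans hp
      have hlt : m - 1 < m := by omega
      have hrec := ih (m-1) hlt p' (by omega) hp'd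
      exact Relation.ReflTransGen.head ⟨hp, hp'd, hadj⟩ hrec

lemma chain_of_preconnected {α : Type*} [PseudoMetricSpace α] {S : Set α}
    (hS : IsPreconnected S) {ε : ℝ} (hε : 0 < ε) {x y : α} (hx : x ∈ S) (hy : y ∈ S) :
    Relation.ReflTransGen (fun a b => a ∈ S ∧ b ∈ S ∧ dist a b < ε) x y := by
  set R := fun a b : α => a ∈ S ∧ b ∈ S ∧ dist a b < ε with hR
  by_contra hcon
  set T := {z | z ∈ S ∧ Relation.ReflTransGen R x z} with hT
  set U := ⋃ z ∈ T, Metric.ball z ε with hU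
  set V := ⋃ z ∈ S \ T, Metric.ball z ε with hV
  have hUo : IsOpen U := isOpen_biUnion (fun _ _ => Metric.isOpen_ball)
  have hVo : IsOpen V := isOpen_biUnion (fun _ _ => Metric.isOpen_ball)
  have hSUV : S ⊆ U ∪ V := by
    intro z hz
    by_cases hzT : z ∈ T
    · exact Or.inl (Set.mem_biUnion hzT (Metric.mem_ball_self hε))
    · exact Or.inr (Set.mem_biUnion ⟨hz, hzT⟩ (Metric.mem_ball_self hε))
  have h1 : (S ∩ U).Nonempty :=
    ⟨x, hx, Set.mem_biUnion ⟨hx, Relation.ReflTransGen.refl⟩ (Metric.mem_ball_self hε)⟩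
  have h2 : (S ∩ V).Nonempty :=
    ⟨y, hy, Set.mem_biUnion (⟨hy, fun (h : y ∈ T) => hcon h.2⟩ : y ∈ S \ T) (Metric.mem_ball_self hε)⟩
  obtain ⟨z, hzS, hzU, hzV⟩ := hS U V hUo hVo hSUV h1 h2
  obtain ⟨a, haT, hza⟩ := Set.mem_iUnion₂.mp hzU
  obtain ⟨b, hbST, hzb⟩ := Set.mem_iUnion₂.mp hzV
  have hzT : z ∈ T := ⟨hzS, haT.2.tail ⟨haT.1, hzS, by rw [dist_comm]; exact hza⟩⟩
  have hbT : b ∈ T := ⟨hbST.1, hzT.2.tail ⟨hzS, hbST.1, hzb⟩⟩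
  exact hbST.2 hbT

lemma kAdj_symm {n k : ℕ} {p q : Fin n → ℤ} (h : kAdj n k p q) : kAdj n k q p := by
  obtain ⟨h1, h2, h3⟩ := h
  refine ⟨h1.symm, fun i => by rw [abs_sub_comm]; exact h2 i, ?_⟩
  have : Finset.univ.filter (fun i => q i ≠ p i)
      = Finset.univ.filter (fun i => p i ≠ q i) := by
    apply Finset.filter_congr
    intro i _
    simp [ne_comm]
  rw [this]; exact h3

lemma rtg_symm {α : Type*} {R : α → α → Prop} (h : ∀ a b, R a b → R b a) {x y : α}
    (hxy : Relation.ReflTransGen R x y) : Relation.ReflTransGen R y x := by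
  induction hxy with
  | refl => exact .refl
  | tail _ st ih => exact Relation.ReflTransGen.head (h _ _ st) ih

/-- If `X ⊆ ℝ^n` (`n ≥ 2`) is disconnected but its closure is connected, then for every
`r > √n / 2` the `r`-offset discretization of `X` is `(n-1)`-connected. -/
theorem disc_conn_of_disconnected (n : ℕ) (hn : 2 ≤ n)
    (X : Set (EuclideanSpace ℝ (Fin n)))
    (hX : ¬ IsConnected X) (hcl : IsConnected (closure X))
    (r : ℝ) (hr : Real.sqrt n / 2 < r) :
    kConn n (n - 1) (disc n X r) := by
  intro p hp q hq
  obtain ⟨xp, hxpX, hpd⟩ := mem_disc_iff.mp hp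
  obtain ⟨xq, hxqX, hqd⟩ := mem_disc_iff.mp hq
  set sq := Real.sqrt n with hsqdef
  have hεpos : 0 < (r - sq/2)/2 := by linarith
  set ε := (r - sq/2)/2 with hεdef
  set Rd := fun a b : Fin n → ℤ =>
    a ∈ disc n X r ∧ b ∈ disc n X r ∧ kAdj n (n-1) a b with hRd
  set rnd : EuclideanSpace ℝ (Fin n) → (Fin n → ℤ) := fun x i => round (x i) with hrnddef
  have hrnd : ∀ x : EuclideanSpace ℝ (Fin n), ∀ i, |((rnd x i : ℤ) : ℝ) - x i| ≤ 1/2 := by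
    intro x i
    rw [abs_sub_comm]
    exact abs_sub_round (x i)
  have hrnd_dist : ∀ x : EuclideanSpace ℝ (Fin n), dist (toE n (rnd x)) x ≤ sq/2 := by
    intro x
    have := dist_toE_le n (rnd x) x (1/2) (by norm_num) (hrnd x)
    linarith [this]
  -- membership from closeness to a closure point
  have hmem : ∀ (z : Fin n → ℤ) (c : EuclideanSpace ℝ (Fin n)), c ∈ closure X →
      dist (toE n z) c ≤ sq/2 + ε → z ∈ disc n X r := by
    intro z c hc hzc
    obtain ⟨x', hx'X, hcx'⟩ := Metric.mem_closure_iff.mp hc ε hεpos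
    refine mem_disc_iff.mpr ⟨x', hx'X, ?_⟩
    calc dist (toE n z) x' ≤ dist (toE n z) c + dist c x' := dist_triangle _ _ _
      _ ≤ r := by linarith
  -- membership from closeness to a point of X within r
  have hmemX : ∀ (z : Fin n → ℤ) (c : EuclideanSpace ℝ (Fin n)), c ∈ X →
      dist (toE n z) c ≤ r → z ∈ disc n X r := fun z c hc hzc =>
    mem_disc_iff.mpr ⟨c, hc, hzc⟩
  -- part 1 : p to rnd xp
  have part1 : Relation.ReflTransGen Rd p (rnd xp) := by
    have h := descent n xp r (rnd xp) (hrnd xp) _ p rfl hpd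
    exact Relation.ReflTransGen.mono (fun a b hab => ⟨hmemX a xp hxpX hab.1, hmemX b xp hxpX hab.2.1, hab.2.2⟩) _ _ h
  -- part 3 : q to rnd xq
  have part3 : Relation.ReflTransGen Rd q (rnd xq) := by
    have h := descent n xq r (rnd xq) (hrnd xq) _ q rfl hqd
    exact Relation.ReflTransGen.mono (fun a b hab => ⟨hmemX a xq hxqX hab.1, hmemX b xq hxqX hab.2.1, hab.2.2⟩) _ _ h
  -- part 2 : rnd xp to rnd xq via an ε-chain in closure X
  have key : ∀ z : EuclideanSpace ℝ (Fin n),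
      Relation.ReflTransGen
        (fun a b => a ∈ closure X ∧ b ∈ closure X ∧ dist a b < ε) xp z →
      Relation.ReflTransGen Rd (rnd xp) (rnd z) := by
    intro z h
    induction h with
    | refl => exact .refl
    | tail _ st ih =>
      rename_i b c _
      obtain ⟨hbS, hcS, hbc⟩ := st
      refine ih.trans ?_
      have hdist : dist (toE n (rnd b)) c ≤ sq/2 + ε := by
        calc dist (toE n (rnd b)) c ≤ dist (toE n (rnd b)) b + dist b c := dist_triangle _ _ _
          _ ≤ sq/2 + ε := add_le_add (hrnd_dist b) hbc.le
      have h := descent n c (sq/2 + ε) (rnd c) (hrnd c) _ (rnd b) rfl hdist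
      exact Relation.ReflTransGen.mono (fun a b' hab => ⟨hmem a c hcS hab.1, hmem b' c hcS hab.2.1, hab.2.2⟩) _ _ h
  have hchain := chain_of_preconnected hcl.isPreconnected hεpos
    (subset_closure hxpX) (subset_closure hxqX)
  have part2 := key xq hchain
  exact part1.trans (part2.trans (rtg_symm (fun a b hab => ⟨hab.2.1, hab.1, kAdj_symm hab.2.2⟩) part3))
end
end

section
/- There exists a disconnected set X ⊂ R^2 with connected closure such that the offset discretization Δ_r(X) with r = sqrt(2)/2 is not 1-connected (i.e., the bound r > sqrt(n)/2 in the connectedness theorem is tight for n = 2). -/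
noncomputable section

/-! ### Auxiliary construction: a unit-length diagonal segment with its midpoint removed -/

/-- Parametrization of the diagonal segment through `(1/2, 1/2)`. -/
def ff (u : ℝ) : EuclideanSpace ℝ (Fin 2) := WithLp.toLp 2 (fun _ => 1/2 + u)

lemma cf : Continuous ff := by unfold ff; fun_prop

/-- The example set: the diagonal segment with its midpoint removed. -/
def Xset : Set (EuclideanSpace ℝ (Fin 2)) := ff '' (Set.Icc (-(1/4):ℝ) (1/4) \ {0})

lemma hU : IsOpen {x : EuclideanSpace ℝ (Fin 2) | x 0 < 1/2} :=
  isOpen_lt (EuclideanSpace.proj (𝕜 := ℝ) (0 : Fin 2)).continuous continuous_const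

lemma hV : IsOpen {x : EuclideanSpace ℝ (Fin 2) | (1:ℝ)/2 < x 0} :=
  isOpen_lt continuous_const (EuclideanSpace.proj (𝕜 := ℝ) (0 : Fin 2)).continuous

lemma notconn : ¬ IsConnected Xset := by
  rintro ⟨-, hpre⟩
  have h := hpre {x : EuclideanSpace ℝ (Fin 2) | x 0 < 1/2}
    {x : EuclideanSpace ℝ (Fin 2) | (1:ℝ)/2 < x 0} hU hV ?_ ?_ ?_
  · obtain ⟨x, -, h1, h2⟩ := h
    simp only [Set.mem_setOf_eq] at h1 h2
    linarith
  · rintro x ⟨u, ⟨-, hu0⟩, rfl⟩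
    rcases lt_or_gt_of_ne (hu0 : u ≠ 0) with h | h
    · left; show (1:ℝ)/2 + u < 1/2; linarith
    · right; show (1:ℝ)/2 < 1/2 + u; linarith
  · exact ⟨ff (-(1/4)), ⟨⟨-(1/4), ⟨⟨le_refl _, by norm_num⟩, by norm_num⟩, rfl⟩,
      show (1:ℝ)/2 + -(1/4) < 1/2 by norm_num⟩⟩
  · exact ⟨ff (1/4), ⟨⟨1/4, ⟨⟨by norm_num, le_refl _⟩, by norm_num⟩, rfl⟩,
      show (1:ℝ)/2 < 1/2 + 1/4 by norm_num⟩⟩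

lemma Icc_sub : Set.Icc (-(1/4):ℝ) (1/4) ⊆ closure (Set.Icc (-(1/4):ℝ) (1/4) \ {0}) := by
  intro x hx
  by_cases hx0 : x = (0:ℝ)
  · subst hx0
    have h1 : Set.Ioc (0:ℝ) (1/4) ⊆ Set.Icc (-(1/4):ℝ) (1/4) \ {0} := by
      rintro y ⟨h1, h2⟩; exact ⟨⟨by linarith, h2⟩, by intro h; simp at h; linarith⟩
    have : (0:ℝ) ∈ closure (Set.Ioc (0:ℝ) (1/4)) := by
      rw [closure_Ioc (by norm_num : (0:ℝ) ≠ 1/4)]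
      exact ⟨le_refl _, by norm_num⟩
    exact closure_mono h1 this
  · exact subset_closure ⟨hx, hx0⟩

lemma closconn : IsConnected (closure Xset) := by
  have hcl : closure Xset = ff '' Set.Icc (-(1/4):ℝ) (1/4) := by
    apply subset_antisymm
    · exact closure_minimal (Set.image_mono (f := ff) Set.diff_subset)
        ((isCompact_Icc.image cf).isClosed)
    · calc ff '' Set.Icc (-(1/4):ℝ) (1/4)
          ⊆ ff '' closure (Set.Icc (-(1/4):ℝ) (1/4) \ {0}) := Set.image_mono (f := ff) Icc_sub
        _ ⊆ closure Xset := image_closure_subset_closure_image cf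
  rw [hcl]
  exact (isConnected_Icc (by norm_num)).image ff cf.continuousOn

lemma dist_toE (p : Fin 2 → ℤ) (u : ℝ) :
    dist (toE 2 p) (ff u)
      = Real.sqrt (((p 0 : ℝ) - (1/2+u))^2 + ((p 1 : ℝ) - (1/2+u))^2) := by
  rw [EuclideanSpace.dist_eq]
  simp [Fin.sum_univ_two, toE, ff, Real.dist_eq, sq_abs]

lemma sqrt_half : Real.sqrt 2 / 2 = Real.sqrt (1/2) := by
  rw [show (1/2:ℝ) = (Real.sqrt 2 / 2)^2 by
    rw [div_pow, Real.sq_sqrt (by norm_num : (0:ℝ) ≤ 2)]; norm_num]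
  rw [Real.sqrt_sq (by positivity)]

lemma mem_disc_iff_s7 (p : Fin 2 → ℤ) :
    p ∈ disc 2 Xset (Real.sqrt 2 / 2) ↔
      ∃ u : ℝ, (-(1/4) ≤ u ∧ u ≤ 1/4 ∧ u ≠ 0) ∧
        ((p 0 : ℝ) - (1/2+u))^2 + ((p 1 : ℝ) - (1/2+u))^2 ≤ 1/2 := by
  constructor
  · rintro hp
    simp only [disc, offset, Set.mem_setOf_eq, Set.mem_iUnion, Metric.mem_closedBall] at hp
    obtain ⟨x, ⟨u, ⟨⟨h1, h2⟩, h0⟩, rfl⟩, hd⟩ := hp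
    refine ⟨u, ⟨h1, h2, h0⟩, ?_⟩
    rw [dist_toE, sqrt_half] at hd
    exact (Real.sqrt_le_sqrt_iff (by positivity)).mp hd
  · rintro ⟨u, ⟨h1, h2, h0⟩, hd⟩
    simp only [disc, offset, Set.mem_setOf_eq, Set.mem_iUnion, Metric.mem_closedBall]
    refine ⟨ff u, ⟨u, ⟨⟨h1, h2⟩, h0⟩, rfl⟩, ?_⟩
    rw [dist_toE, sqrt_half]
    exact Real.sqrt_le_sqrt hd

lemma key (a b : ℤ) (u : ℝ) (h1 : -(1/4) ≤ u) (h2 : u ≤ 1/4) (h0 : u ≠ 0)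
    (h : ((a:ℝ) - (1/2+u))^2 + ((b:ℝ) - (1/2+u))^2 ≤ 1/2) :
    (a = 0 ∧ b = 0) ∨ (a = 1 ∧ b = 1) := by
  have ha0 : (0:ℤ) ≤ a := by
    by_contra h'
    push_neg at h'
    have hz : a ≤ -1 := by omega
    have : (a:ℝ) ≤ -1 := by exact_mod_cast hz
    nlinarith [sq_nonneg ((b:ℝ) - (1/2+u))]
  have ha1 : a ≤ 1 := by
    by_contra h'
    push_neg at h'
    have : (2:ℝ) ≤ a := by exact_mod_cast h'
    nlinarith [sq_nonneg ((b:ℝ) - (1/2+u))]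
  have hb0 : (0:ℤ) ≤ b := by
    by_contra h'
    push_neg at h'
    have hz : b ≤ -1 := by omega
    have : (b:ℝ) ≤ -1 := by exact_mod_cast hz
    nlinarith [sq_nonneg ((a:ℝ) - (1/2+u))]
  have hb1 : b ≤ 1 := by
    by_contra h'
    push_neg at h'
    have : (2:ℝ) ≤ b := by exact_mod_cast h'
    nlinarith [sq_nonneg ((a:ℝ) - (1/2+u))]
  have hu2 : 0 < u^2 := pow_pos (abs_pos.mpr h0) 2 |>.trans_le (by rw [sq_abs])
  interval_cases a <;> interval_cases b <;> simp_all <;> nlinarith [sq_abs u]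

lemma p0_mem : (![0,0] : Fin 2 → ℤ) ∈ disc 2 Xset (Real.sqrt 2 / 2) := by
  rw [mem_disc_iff_s7]
  refine ⟨-(1/4), ⟨le_refl _, by norm_num, by norm_num⟩, ?_⟩
  norm_num

lemma p1_mem : (![1,1] : Fin 2 → ℤ) ∈ disc 2 Xset (Real.sqrt 2 / 2) := by
  rw [mem_disc_iff_s7]
  refine ⟨1/4, ⟨by norm_num, le_refl _, by norm_num⟩, ?_⟩
  norm_num

lemma not_adj : ¬ kAdj 2 1 (![0,0] : Fin 2 → ℤ) ![1,1] := by
  rintro ⟨-, -, hcard⟩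
  have : (Finset.univ.filter (fun i => (![0,0] : Fin 2 → ℤ) i ≠ ![1,1] i)) = Finset.univ := by
    decide
  rw [this] at hcard
  simp at hcard

lemma notkconn : ¬ kConn 2 1 (disc 2 Xset (Real.sqrt 2 / 2)) := by
  intro hk
  have h := hk ![0,0] p0_mem ![1,1] p1_mem
  rcases h.cases_head with heq | ⟨c, ⟨-, hcS, hadj⟩, -⟩
  · have : (0:ℤ) = 1 := congrFun heq 0
    omega
  · rw [mem_disc_iff_s7] at hcS
    obtain ⟨u, ⟨h1, h2, h0⟩, hd⟩ := hcS
    rcases key (c 0) (c 1) u h1 h2 h0 hd with ⟨e0, e1⟩ | ⟨e0, e1⟩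
    · apply hadj.1
      funext i
      fin_cases i <;> simp [e0, e1]
    · have hc : c = ![1,1] := by funext i; fin_cases i <;> simp [e0, e1]
      rw [hc] at hadj
      exact not_adj hadj

/-- The bound `r > √n / 2` is tight for `n = 2`: there is a disconnected `X ⊂ ℝ²` with
connected closure whose `(√2 / 2)`-offset discretization is not `1`-connected. -/
theorem tightness_nminus1 :
    ∃ X : Set (EuclideanSpace ℝ (Fin 2)),
      ¬ IsConnected X ∧ IsConnected (closure X) ∧
        ¬ kConn 2 1 (disc 2 X (Real.sqrt 2 / 2)) :=
  ⟨Xset, notconn, closconn, notkconn⟩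
end
end

section
/- If X ⊆ R^n (n ≥ 2) is a connected set, then for every r ≥ sqrt(n)/2 the offset discretization Δ_r(X) = U(X,r) ∩ Z^n is (n−1)-connected. -/
noncomputable section

namespace DiscConnAux

/-- The step relation of `kConn` for `k = n-1`. -/
def Stp (n : ℕ) (X : Set (EuclideanSpace ℝ (Fin n))) (r : ℝ) (a b : Fin n → ℤ) : Prop :=
  a ∈ disc n X r ∧ b ∈ disc n X r ∧ kAdj n (n - 1) a b

lemma kAdj_symm {n k : ℕ} {p q : Fin n → ℤ} (h : kAdj n k p q) : kAdj n k q p := by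
  obtain ⟨h1, h2, h3⟩ := h
  refine ⟨Ne.symm h1, fun i => by rw [abs_sub_comm]; exact h2 i, ?_⟩
  have he : (Finset.univ.filter fun i => q i ≠ p i) =
      (Finset.univ.filter fun i => p i ≠ q i) := by
    apply Finset.ext
    intro i
    simp only [Finset.mem_filter, Finset.mem_univ, true_and]
    exact ne_comm
  rw [he]; exact h3

lemma stp_symm {n : ℕ} {X : Set (EuclideanSpace ℝ (Fin n))} {r : ℝ} :
    Symmetric (Stp n X r) := fun _ _ ⟨h1, h2, h3⟩ => ⟨h2, h1, kAdj_symm h3⟩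

lemma coord_dist_le {n : ℕ} (y z : EuclideanSpace ℝ (Fin n)) (i : Fin n) :
    |y i - z i| ≤ dist y z := by
  have h : |y i - z i| ^ 2 ≤ ∑ j, dist (y j) (z j) ^ 2 := by
    have := Finset.single_le_sum (f := fun j => dist (y j) (z j) ^ 2)
      (fun j _ => sq_nonneg _) (Finset.mem_univ i)
    simpa only [Real.dist_eq] using this
  calc |y i - z i| = Real.sqrt (|y i - z i| ^ 2) := (Real.sqrt_sq (abs_nonneg _)).symm
    _ ≤ Real.sqrt (∑ j, dist (y j) (z j) ^ 2) := Real.sqrt_le_sqrt h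
    _ = dist y z := (EuclideanSpace.dist_eq y z).symm

lemma dist_toE_le {n : ℕ} {q : Fin n → ℤ} {y : EuclideanSpace ℝ (Fin n)}
    (h : ∀ i, |(q i : ℝ) - y i| ≤ 1 / 2) : dist (toE n q) y ≤ Real.sqrt n / 2 := by
  rw [EuclideanSpace.dist_eq]
  have hs : Real.sqrt n / 2 = Real.sqrt (∑ _i : Fin n, (1 / 2 : ℝ) ^ 2) := by
    rw [Finset.sum_const, Finset.card_univ, Fintype.card_fin, nsmul_eq_mul,
      Real.sqrt_mul (by positivity), Real.sqrt_sq (by norm_num)]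
    ring
  rw [hs]
  apply Real.sqrt_le_sqrt
  apply Finset.sum_le_sum
  intro i _
  have hd : dist (toE n q i) (y i) = |(q i : ℝ) - y i| := Real.dist_eq _ _
  rw [hd]
  have := abs_le.mp (h i)
  have habs : |(q i : ℝ) - y i| ^ 2 ≤ (1 / 2 : ℝ) ^ 2 := by
    apply sq_le_sq' <;> [linarith [abs_nonneg ((q i : ℝ) - y i)]; exact h i]
  calc |(q i : ℝ) - y i| ^ 2 ≤ (1 / 2 : ℝ) ^ 2 := habs

/-- From any integer point within distance `r` of `x ∈ X`, we can walk inside the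
disc to any integer point `m` with `|m i - x i| ≤ 1/2` for all `i`. -/
lemma path_to_center {n : ℕ} (hn : 1 ≤ n) {X : Set (EuclideanSpace ℝ (Fin n))} {r : ℝ}
    {x : EuclideanSpace ℝ (Fin n)} (hx : x ∈ X) (m : Fin n → ℤ)
    (hm : ∀ i, |(m i : ℝ) - x i| ≤ 1 / 2) :
    ∀ N (q : Fin n → ℤ), (∑ i, (q i - m i).natAbs) = N → dist (toE n q) x ≤ r →
      Relation.ReflTransGen (Stp n X r) q m := by
  intro N
  induction N using Nat.strong_induction_on with
  | _ N ih =>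
    intro q hN hq
    by_cases hqm : q = m
    · subst hqm; exact .refl
    · have hex : ∃ i, q i ≠ m i := by
        by_contra hc; push_neg at hc; exact hqm (funext hc)
      obtain ⟨i, hi⟩ := hex
      set s : ℤ := if m i < q i then q i - 1 else q i + 1 with hs
      set q' := Function.update q i s with hq'def
      have hmx := abs_le.mp (hm i)
      -- coordinate bound
      have key : |(s : ℝ) - x i| ≤ |(q i : ℝ) - x i| := by
        by_cases hlt : m i < q i
        · have hs' : s = q i - 1 := by rw [hs, if_pos hlt]
          have h1 : (m i : ℝ) + 1 ≤ (q i : ℝ) := by exact_mod_cast hlt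
          have h2 : (1 : ℝ) / 2 ≤ (q i : ℝ) - x i := by linarith
          have h3 : |(q i : ℝ) - x i| = (q i : ℝ) - x i := abs_of_nonneg (by linarith)
          rw [hs', h3, abs_le]
          push_cast
          constructor <;> linarith
        · have hgt : q i < m i := lt_of_le_of_ne (not_lt.mp hlt) hi
          have hs' : s = q i + 1 := by rw [hs, if_neg hlt]
          have h1 : (q i : ℝ) + 1 ≤ (m i : ℝ) := by exact_mod_cast hgt
          have h2 : (q i : ℝ) - x i ≤ -(1 / 2) := by linarith
          have h3 : |(q i : ℝ) - x i| = -((q i : ℝ) - x i) := abs_of_nonpos (by linarith)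
          rw [hs', h3, abs_le]
          push_cast
          constructor <;> linarith
      -- q' is still within distance r of x
      have hq'r : dist (toE n q') x ≤ r := by
        refine le_trans ?_ hq
        rw [EuclideanSpace.dist_eq, EuclideanSpace.dist_eq]
        apply Real.sqrt_le_sqrt
        apply Finset.sum_le_sum
        intro j _
        by_cases hj : j = i
        · subst hj
          have e1 : toE n q' j = (s : ℝ) := by
            simp only [toE, hq'def, Function.update_self]
          have e2 : toE n q j = (q j : ℝ) := rfl
          rw [e1, e2, Real.dist_eq, Real.dist_eq]
          exact pow_le_pow_left₀ (abs_nonneg _) key 2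
        · have e1 : q' j = q j := Function.update_of_ne hj _ _
          have e2 : toE n q' j = toE n q j := by simp only [toE, e1]
          rw [e2]
      -- both endpoints are in the disc
      have hmemq : q ∈ disc n X r := by
        refine Set.mem_setOf_eq ▸ Set.mem_biUnion hx ?_
        exact Metric.mem_closedBall.mpr hq
      have hmemq' : q' ∈ disc n X r := by
        refine Set.mem_setOf_eq ▸ Set.mem_biUnion hx ?_
        exact Metric.mem_closedBall.mpr hq'r
      -- adjacency
      have hsne : s ≠ q i := by
        rw [hs]; by_cases hlt : m i < q i <;> simp [hlt]
      have hadj : kAdj n (n - 1) q q' := by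
        refine ⟨?_, ?_, ?_⟩
        · intro h
          have := congrFun h i
          rw [hq'def, Function.update_self] at this
          exact hsne this.symm
        · intro j
          by_cases hj : j = i
          · subst hj
            rw [hq'def, Function.update_self, hs]
            by_cases hlt : m j < q j <;> simp [hlt]
          · rw [hq'def, Function.update_of_ne hj]
            simp
        · have hsub : (Finset.univ.filter fun j => q j ≠ q' j) ⊆ {i} := by
            intro j hj
            rw [Finset.mem_filter] at hj
            rw [Finset.mem_singleton]
            by_contra hji
            exact hj.2 (by rw [hq'def, Function.update_of_ne hji])
          calc (Finset.univ.filter fun j => q j ≠ q' j).card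
              ≤ ({i} : Finset (Fin n)).card := Finset.card_le_card hsub
            _ = 1 := Finset.card_singleton i
            _ ≤ n - (n - 1) := by omega
      -- the measure decreases
      have hdec : (∑ j, (q' j - m j).natAbs) < N := by
        have hfun : (fun j => (q' j - m j).natAbs) =
            Function.update (fun j => (q j - m j).natAbs) i ((s - m i).natAbs) := by
          funext j
          by_cases hj : j = i
          · subst hj
            rw [hq'def, Function.update_self, Function.update_self]
          · rw [hq'def, Function.update_of_ne hj, Function.update_of_ne hj]
        have h1 : (∑ j, (q' j - m j).natAbs) =
            (s - m i).natAbs + ∑ j ∈ Finset.univ.erase i, (q j - m j).natAbs := by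
          rw [hfun]
          rw [← Finset.add_sum_erase _ _ (Finset.mem_univ i), Function.update_self]
          congr 1
          apply Finset.sum_congr rfl
          intro j hj
          rw [Function.update_of_ne (Finset.ne_of_mem_erase hj)]
        have h2 : N = (q i - m i).natAbs + ∑ j ∈ Finset.univ.erase i, (q j - m j).natAbs := by
          rw [← hN, ← Finset.add_sum_erase _ _ (Finset.mem_univ i)]
        have h3 : (s - m i).natAbs < (q i - m i).natAbs := by
          rw [hs]; by_cases hlt : m i < q i <;> simp [hlt] <;> omega
        omega
      exact Relation.ReflTransGen.head ⟨hmemq, hmemq', hadj⟩ (ih _ hdec q' rfl hq'r)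

/-- For every real `a` there is a `δ > 0` such that any `b` within `δ` of `a`
shares an integer within distance `1/2` with `a`. -/
lemma exists_delta (a : ℝ) :
    ∃ δ : ℝ, 0 < δ ∧ ∀ b : ℝ, |b - a| < δ →
      ∃ z : ℤ, |(z : ℝ) - a| ≤ 1 / 2 ∧ |(z : ℝ) - b| ≤ 1 / 2 := by
  set k : ℤ := ⌊a + 1 / 2⌋ with hk
  have h1 : (k : ℝ) ≤ a + 1 / 2 := Int.floor_le _
  have h2 : a + 1 / 2 < (k : ℝ) + 1 := Int.lt_floor_add_one _
  by_cases h0 : (k : ℝ) = a + 1 / 2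
  · refine ⟨1 / 2, by norm_num, fun b hb => ?_⟩
    rw [abs_lt] at hb
    by_cases hba : a ≤ b
    · exact ⟨k, by rw [abs_le]; constructor <;> linarith,
        by rw [abs_le]; constructor <;> linarith⟩
    · refine ⟨k - 1, ?_, ?_⟩ <;> (rw [abs_le]; push_cast; constructor <;> linarith)
  · have h1' : (k : ℝ) < a + 1 / 2 := lt_of_le_of_ne h1 h0
    refine ⟨min (a + 1 / 2 - k) ((k : ℝ) + 1 / 2 - a), lt_min (by linarith) (by linarith),
      fun b hb => ?_⟩
    rw [abs_lt] at hb
    have hb1 : b - a < (k : ℝ) + 1 / 2 - a := lt_of_lt_of_le hb.2 (min_le_right _ _)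
    have hb2 : -(a + 1 / 2 - k) < b - a := lt_of_le_of_lt (neg_le_neg (min_le_left _ _)) hb.1
    exact ⟨k, by rw [abs_le]; constructor <;> linarith,
      by rw [abs_le]; constructor <;> linarith⟩

/-- Vector version: nearby points of `ℝⁿ` share a common "cell point". -/
lemma exists_delta_vec {n : ℕ} (hn : 0 < n) (y : EuclideanSpace ℝ (Fin n)) :
    ∃ δ : ℝ, 0 < δ ∧ ∀ w : EuclideanSpace ℝ (Fin n), dist w y < δ →
      ∃ q : Fin n → ℤ, (∀ i, |(q i : ℝ) - y i| ≤ 1 / 2) ∧ (∀ i, |(q i : ℝ) - w i| ≤ 1 / 2) := by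
  choose δf hδf hf using fun i => exists_delta (y i)
  haveI : Nonempty (Fin n) := ⟨⟨0, hn⟩⟩
  refine ⟨Finset.univ.inf' Finset.univ_nonempty δf, ?_, ?_⟩
  · rw [Finset.lt_inf'_iff]
    exact fun i _ => hδf i
  · intro w hw
    have hcoord : ∀ i, |w i - y i| < δf i := fun i =>
      lt_of_le_of_lt (coord_dist_le w y i)
        (lt_of_lt_of_le hw (Finset.inf'_le _ (Finset.mem_univ i)))
    choose qf hq1 hq2 using fun i => hf i (w i) (hcoord i)
    exact ⟨qf, hq1, hq2⟩

end DiscConnAux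

open DiscConnAux in
/-- If `X ⊆ ℝ^n` (`n ≥ 2`) is connected, then for every `r ≥ √n / 2` the `r`-offset
discretization of `X` is `(n-1)`-connected. -/
theorem disc_conn_of_connected (n : ℕ) (hn : 2 ≤ n)
    (X : Set (EuclideanSpace ℝ (Fin n))) (hX : IsConnected X)
    (r : ℝ) (hr : Real.sqrt n / 2 ≤ r) :
    kConn n (n - 1) (disc n X r) := by
  intro p hp q hq
  have hn1 : 1 ≤ n := by omega
  have hn0 : 0 < n := by omega
  show Relation.ReflTransGen (Stp n X r) p q
  have hRsym : Symmetric (Relation.ReflTransGen (Stp n X r)) :=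
    by haveI : Std.Symm (Stp n X r) := ⟨fun a b h => stp_symm h⟩; exact fun a b h => Std.Symm.symm a b h
  -- walking inside a single ball
  have hball : ∀ x ∈ X, ∀ c m : Fin n → ℤ, dist (toE n c) x ≤ r →
      (∀ i, |(m i : ℝ) - x i| ≤ 1 / 2) → Relation.ReflTransGen (Stp n X r) c m :=
    fun x hx c m hc hm => path_to_center hn1 hx m hm _ c rfl hc
  -- the set of points of X whose cell points are reachable from p
  set A : Set (EuclideanSpace ℝ (Fin n)) :=
    {y | y ∈ X ∧ ∃ c : Fin n → ℤ, (∀ i, |(c i : ℝ) - y i| ≤ 1 / 2) ∧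
      Relation.ReflTransGen (Stp n X r) p c} with hA
  -- transfer along shared cell points
  have htrans : ∀ y ∈ A, ∀ w ∈ X,
      (∃ c : Fin n → ℤ, (∀ i, |(c i : ℝ) - y i| ≤ 1 / 2) ∧ (∀ i, |(c i : ℝ) - w i| ≤ 1 / 2)) →
      w ∈ A := by
    rintro y ⟨hyX, c, hcy, hpc⟩ w hwX ⟨c', hc'y, hc'w⟩
    refine ⟨hwX, c', hc'w, hpc.trans ?_⟩
    exact hball y hyX c c' (le_trans (dist_toE_le hcy) hr) hc'y
  -- per-point delta
  choose δ hδpos hδ using fun y : EuclideanSpace ℝ (Fin n) => exists_delta_vec hn0 y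
  -- A is nonempty: the witness of p lies in A
  obtain ⟨x, hxX, hpx⟩ := Set.mem_iUnion₂.mp hp
  rw [Metric.mem_closedBall] at hpx
  have hm : ∀ i, |((round (x i) : ℤ) : ℝ) - x i| ≤ 1 / 2 := fun i => by
    rw [abs_sub_comm]; exact abs_sub_round (x i)
  have hxA : x ∈ A := ⟨hxX, _, hm, hball x hxX p _ hpx hm⟩
  -- X ⊆ A via connectedness
  have hXA : X ⊆ A := by
    by_contra hc
    rw [Set.not_subset] at hc
    obtain ⟨y0, hy0X, hy0A⟩ := hc
    have hpre := hX.isPreconnected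
    have := hpre (⋃ y ∈ A, Metric.ball y (δ y)) (⋃ y ∈ X \ A, Metric.ball y (δ y))
      (isOpen_biUnion fun _ _ => Metric.isOpen_ball)
      (isOpen_biUnion fun _ _ => Metric.isOpen_ball)
      (by
        intro z hz
        by_cases hzA : z ∈ A
        · exact Or.inl (Set.mem_biUnion hzA (Metric.mem_ball_self (hδpos z)))
        · exact Or.inr (Set.mem_biUnion ⟨hz, hzA⟩ (Metric.mem_ball_self (hδpos z))))
      ⟨x, hxX, Set.mem_biUnion hxA (Metric.mem_ball_self (hδpos x))⟩
      ⟨y0, hy0X, Set.mem_biUnion ⟨hy0X, hy0A⟩ (Metric.mem_ball_self (hδpos y0))⟩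
    obtain ⟨w, hwX, hwU, hwV⟩ := this
    obtain ⟨y1, hy1A, hwy1⟩ := Set.mem_iUnion₂.mp hwU
    obtain ⟨y2, hy2, hwy2⟩ := Set.mem_iUnion₂.mp hwV
    rw [Metric.mem_ball] at hwy1 hwy2
    -- w ∈ A via y1
    have hwA : w ∈ A := htrans y1 hy1A w hwX (hδ y1 w hwy1)
    -- then y2 ∈ A via w, contradiction
    have hy2A : y2 ∈ A := by
      obtain ⟨c, hcw, hcy2⟩ := hδ y2 w hwy2
      exact htrans w hwA y2 hy2.1 ⟨c, hcy2, hcw⟩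
    exact hy2.2 hy2A
  -- conclude for q
  obtain ⟨y, hyX, hqy⟩ := Set.mem_iUnion₂.mp hq
  rw [Metric.mem_closedBall] at hqy
  obtain ⟨-, c, hcy, hpc⟩ := hXA hyX
  exact hpc.trans (hRsym (hball y hyX q c hqy hcy))
end
end

section
/- If X ⊂ R^n (n ≥ 2) is a (possibly disconnected) set such that the offset U(X,r) is connected for some r > 0, then Δ_{r + sqrt(n)/2}(X) is (n−1)-connected and Δ_{r + sqrt(n−1)/2}(X) is 0-connected. -/
noncomputable section

namespace DP

open Finset Metric Relation

variable {n : ℕ}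

lemma dist_eq_sqrt (u v : EuclideanSpace ℝ (Fin n)) :
    dist u v = Real.sqrt (∑ i, (u i - v i) ^ 2) := by
  rw [EuclideanSpace.dist_eq]
  congr 1
  refine Finset.sum_congr rfl fun i _ => ?_
  rw [Real.dist_eq, sq_abs]

lemma dist_le_of_sum_sq {u v : EuclideanSpace ℝ (Fin n)} {c : ℝ} (hc : 0 ≤ c)
    (h : ∑ i, (u i - v i) ^ 2 ≤ c ^ 2) : dist u v ≤ c := by
  rw [dist_eq_sqrt]
  calc Real.sqrt (∑ i, (u i - v i) ^ 2) ≤ Real.sqrt (c ^ 2) := Real.sqrt_le_sqrt h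
  _ = c := by rw [Real.sqrt_sq hc]

lemma sum_sq_le_of_dist {u v : EuclideanSpace ℝ (Fin n)} {c : ℝ}
    (h : dist u v ≤ c) : ∑ i, (u i - v i) ^ 2 ≤ c ^ 2 := by
  have h0 : 0 ≤ ∑ i, (u i - v i) ^ 2 := Finset.sum_nonneg fun i _ => sq_nonneg _
  have h1 : Real.sqrt (∑ i, (u i - v i) ^ 2) ≤ c := by rw [← dist_eq_sqrt]; exact h
  calc (∑ i, (u i - v i) ^ 2) = Real.sqrt (∑ i, (u i - v i) ^ 2) ^ 2 := (Real.sq_sqrt h0).symm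
  _ ≤ c ^ 2 := pow_le_pow_left₀ (Real.sqrt_nonneg _) h1 2

lemma abs_coord_le_of_dist {u v : EuclideanSpace ℝ (Fin n)} {c : ℝ}
    (h : dist u v ≤ c) (i : Fin n) : |u i - v i| ≤ c := by
  have hc : 0 ≤ c := le_trans dist_nonneg h
  have h1 : (u i - v i) ^ 2 ≤ c ^ 2 := by
    refine le_trans ?_ (sum_sq_le_of_dist h)
    exact Finset.single_le_sum (f := fun j => (u j - v j) ^ 2) (fun j _ => sq_nonneg _) (Finset.mem_univ i)
  rw [abs_le]; constructor <;> nlinarith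

lemma kAdj_symm {k : ℕ} {p q : Fin n → ℤ} (h : kAdj n k p q) : kAdj n k q p := by
  obtain ⟨h1, h2, h3⟩ := h
  refine ⟨h1.symm, fun i => by rw [abs_sub_comm]; exact h2 i, le_trans (le_of_eq ?_) h3⟩
  congr 1
  ext i
  simp [ne_comm]

/-- single coordinate move adjacency -/
lemma kAdj_update {k : ℕ} (hk : 1 ≤ n - k) (p : Fin n → ℤ) (i : Fin n) (e : ℤ)
    (he : e = 1 ∨ e = -1) : kAdj n k p (Function.update p i (p i + e)) := by
  have he0 : e ≠ 0 := by rcases he with h | h <;> simp [h]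
  refine ⟨?_, ?_, ?_⟩
  · intro h
    have := congrFun h i
    rw [Function.update_self] at this
    omega
  · intro j
    by_cases hj : j = i
    · subst hj; rw [Function.update_self]; rcases he with h | h <;> simp [h]
    · rw [Function.update_of_ne hj]; simp
  · have hsub : (Finset.univ.filter (fun j => p j ≠ Function.update p i (p i + e) j)) ⊆ {i} := by
      intro j hj
      simp only [Finset.mem_filter] at hj
      by_contra hji
      simp only [Finset.mem_singleton] at hji
      rw [Function.update_of_ne hji] at hj
      exact hj.2 rfl
    calc (Finset.univ.filter (fun j => p j ≠ Function.update p i (p i + e) j)).card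
        ≤ ({i} : Finset (Fin n)).card := Finset.card_le_card hsub
    _ = 1 := Finset.card_singleton i
    _ ≤ n - k := by omega


lemma step_mono {a : ℝ} {u v e : ℤ} (hne : u ≠ v) (he : e = if u < v then 1 else -1)
    (hup : ((u:ℝ) - a)^2 < ((u:ℝ) + (e:ℝ) - a)^2) :
    ((u:ℝ) + (e:ℝ) - a)^2 ≤ ((v:ℝ) - a)^2 := by
  rcases lt_or_gt_of_ne hne with h | h
  · rw [if_pos h] at he
    subst he
    push_cast at hup ⊢
    have hv : (u:ℝ) + 1 ≤ (v:ℝ) := by exact_mod_cast h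
    have h1 : (0:ℝ) < (u:ℝ) + 1 - a := by nlinarith
    have h2 : (u:ℝ) + 1 - a ≤ (v:ℝ) - a := by linarith
    nlinarith [mul_nonneg (by linarith : (0:ℝ) ≤ (v:ℝ) - a - ((u:ℝ) + 1 - a))
      (by linarith : (0:ℝ) ≤ (v:ℝ) - a + ((u:ℝ) + 1 - a))]
  · rw [if_neg (not_lt.mpr h.le)] at he
    subst he
    push_cast at hup ⊢
    have hv : (v:ℝ) ≤ (u:ℝ) - 1 := by
      have h2 : v + 1 ≤ u := Int.add_one_le_iff.mpr h
      have h3 : (v:ℝ) + 1 ≤ (u:ℝ) := by exact_mod_cast h2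
      linarith
    have h1 : 0 < 2*a - 2*(u:ℝ) + 1 := by nlinarith
    nlinarith [mul_nonneg (by linarith : (0:ℝ) ≤ (u:ℝ) - 1 - v)
      (by linarith : (0:ℝ) ≤ 2*a - (v:ℝ) - (u:ℝ) + 1)]

lemma sum_split (i : Fin n) (f : Fin n → ℝ) :
    ∑ j, f j = f i + ∑ j ∈ Finset.univ.erase i, f j :=
  (Finset.add_sum_erase _ f (Finset.mem_univ i)).symm

lemma sum_split_nat (i : Fin n) (f : Fin n → ℕ) :
    ∑ j, f j = f i + ∑ j ∈ Finset.univ.erase i, f j :=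
  (Finset.add_sum_erase _ f (Finset.mem_univ i)).symm

lemma update_sum_sq (x : EuclideanSpace ℝ (Fin n)) (p : Fin n → ℤ) (i : Fin n) (v : ℤ) :
    ∑ j, (((Function.update p i v) j : ℝ) - x j)^2
      = ((v:ℝ) - x i)^2 + ∑ j ∈ Finset.univ.erase i, ((p j:ℝ) - x j)^2 := by
  rw [sum_split i]
  rw [Function.update_self]
  congr 1
  refine Finset.sum_congr rfl fun j hj => ?_
  rw [Function.update_of_ne (Finset.ne_of_mem_erase hj)]

lemma update_sum_natAbs (p q : Fin n → ℤ) (i : Fin n) (v : ℤ) :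
    ∑ j, ((Function.update p i v) j - q j).natAbs
      = (v - q i).natAbs + ∑ j ∈ Finset.univ.erase i, (p j - q j).natAbs := by
  rw [sum_split_nat i]
  rw [Function.update_self]
  congr 1
  refine Finset.sum_congr rfl fun j hj => ?_
  rw [Function.update_of_ne (Finset.ne_of_mem_erase hj)]

lemma greedy (x : EuclideanSpace ℝ (Fin n)) {k : ℕ} (hk : 1 ≤ n - k) (ρ : ℝ) :
    ∀ N (p q : Fin n → ℤ), (∑ i, (p i - q i).natAbs) = N →
    dist (toE n p) x ≤ ρ → dist (toE n q) x ≤ ρ →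
    Relation.ReflTransGen
      (fun a c => dist (toE n a) x ≤ ρ ∧ dist (toE n c) x ≤ ρ ∧ kAdj n k a c) p q := by
  intro N
  induction N using Nat.strong_induction_on with
  | _ N ih =>
  intro p q hN hp hq
  by_cases hpq : p = q
  · subst hpq; exact .refl
  have hρ : 0 ≤ ρ := le_trans dist_nonneg hp
  have key : ∀ a : Fin n → ℤ, (∑ i, ((a i:ℝ) - x i)^2 ≤ ρ^2) → dist (toE n a) x ≤ ρ := by
    intro a h
    refine dist_le_of_sum_sq hρ ?_
    simpa [toE] using h
  have keyr : ∀ a : Fin n → ℤ, dist (toE n a) x ≤ ρ → ∑ i, ((a i:ℝ) - x i)^2 ≤ ρ^2 := by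
    intro a h
    simpa [toE] using sum_sq_le_of_dist h
  obtain ⟨i0, hi0⟩ : ∃ i, p i ≠ q i := Function.ne_iff.mp hpq
  set σ : Fin n → ℤ := fun i => if p i < q i then 1 else -1 with hσ
  have hσpm : ∀ i, σ i = 1 ∨ σ i = -1 := by
    intro i; simp only [hσ]; split <;> simp
  -- choose the coordinate to move
  have hmain : ∃ i, p i ≠ q i ∧
      ∑ j, (((Function.update p i (p i + σ i)) j : ℝ) - x j)^2 ≤ ρ^2 := by
    by_cases hgood : ∃ i, p i ≠ q i ∧ ((p i:ℝ) + (σ i:ℝ) - x i)^2 ≤ ((p i:ℝ) - x i)^2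
    · obtain ⟨i, hi, hle⟩ := hgood
      refine ⟨i, hi, ?_⟩
      rw [update_sum_sq]
      push_cast
      calc ((p i:ℝ) + (σ i:ℝ) - x i)^2 + ∑ j ∈ Finset.univ.erase i, ((p j:ℝ) - x j)^2
          ≤ ((p i:ℝ) - x i)^2 + ∑ j ∈ Finset.univ.erase i, ((p j:ℝ) - x j)^2 := by linarith
      _ = ∑ j, ((p j:ℝ) - x j)^2 := (sum_split i (fun j => ((p j:ℝ) - x j)^2)).symm
      _ ≤ ρ^2 := keyr p hp
    · push_neg at hgood
      refine ⟨i0, hi0, ?_⟩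
      have hbound : ∑ j, (((Function.update p i0 (p i0 + σ i0)) j : ℝ) - x j)^2
          ≤ ∑ j, ((q j:ℝ) - x j)^2 := by
        refine Finset.sum_le_sum fun j _ => ?_
        by_cases hj : j = i0
        · subst hj
          rw [Function.update_self]
          push_cast
          exact step_mono hi0 rfl (hgood _ hi0)
        · rw [Function.update_of_ne hj]
          by_cases hpj : p j = q j
          · rw [hpj]
          · have h1 := hgood _ hpj
            have h2 := step_mono hpj (rfl : σ j = _) h1
            push_cast at h2 ⊢
            linarith
      exact hbound.trans (keyr q hq)
  obtain ⟨i, hi, hsum⟩ := hmain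
  set p' := Function.update p i (p i + σ i) with hp'def
  have hp' : dist (toE n p') x ≤ ρ := key p' hsum
  have hNpos : 1 ≤ N := by
    have h1 : 1 ≤ (p i - q i).natAbs := by omega
    have h2 : (p i - q i).natAbs ≤ ∑ j, (p j - q j).natAbs :=
      Finset.single_le_sum (f := fun j => (p j - q j).natAbs)
        (fun j _ => Nat.zero_le _) (Finset.mem_univ i)
    omega
  have hdec : ∑ j, (p' j - q j).natAbs = N - 1 := by
    rw [hp'def, update_sum_natAbs]
    rw [sum_split_nat i (fun j => (p j - q j).natAbs)] at hN
    have hσi := hσpm i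
    have : (p i + σ i - q i).natAbs = (p i - q i).natAbs - 1 := by
      simp only [hσ]
      split <;> omega
    omega
  have htail := ih (N-1) (by omega) p' q hdec hp' hq
  exact Relation.ReflTransGen.head ⟨hp, hp', kAdj_update hk p i (σ i) (hσpm i)⟩ htail



def zround (y : EuclideanSpace ℝ (Fin n)) : Fin n → ℤ := fun i => round (y i)

lemma sq_le_sq_of_abs {a b : ℝ} (h : |a| ≤ |b|) : a^2 ≤ b^2 := by
  have := pow_le_pow_left₀ (abs_nonneg a) h 2
  rwa [sq_abs, sq_abs] at this

lemma round_abs_le (t : ℝ) : |(round t : ℝ) - t| ≤ 1/2 := by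
  rw [abs_sub_comm]; exact abs_sub_round t

lemma round_nearest (t : ℝ) (z : ℤ) : |(round t : ℝ) - t| ≤ |(z:ℝ) - t| := by
  by_cases h : z = round t
  · subst h; exact le_refl _
  · have h1 : (1:ℝ) ≤ |(z:ℝ) - (round t:ℝ)| := by
      have h0 : (1:ℤ) ≤ |z - round t| := Int.one_le_abs (sub_ne_zero.mpr h)
      calc (1:ℝ) = ((1:ℤ):ℝ) := by norm_num
      _ ≤ (|z - round t| : ℤ) := by exact_mod_cast h0
      _ = |(z:ℝ) - (round t:ℝ)| := by push_cast [Int.cast_abs]; ring_nf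
    have h2 := abs_sub_le ((z:ℝ)) t ((round t:ℝ))
    have h3 := round_abs_le t
    have h4 : |t - (round t:ℝ)| = |(round t:ℝ) - t| := abs_sub_comm _ _
    linarith

lemma zround_le_dist (y : EuclideanSpace ℝ (Fin n)) (z : Fin n → ℤ) :
    dist (toE n (zround y)) y ≤ dist (toE n z) y := by
  rw [dist_eq_sqrt, dist_eq_sqrt]
  refine Real.sqrt_le_sqrt (Finset.sum_le_sum fun i _ => ?_)
  refine sq_le_sq_of_abs ?_
  show |toE n (zround y) i - y i| ≤ |toE n z i - y i|
  simpa [toE, zround] using round_nearest (y i) (z i)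

lemma zround_dist_le (hn : 1 ≤ n) (y : EuclideanSpace ℝ (Fin n)) :
    dist (toE n (zround y)) y ≤ Real.sqrt n / 2 := by
  have hc : (0:ℝ) ≤ Real.sqrt n / 2 := by positivity
  refine dist_le_of_sum_sq hc ?_
  have hsq : (Real.sqrt n / 2)^2 = (n:ℝ)/4 := by
    rw [div_pow, Real.sq_sqrt (Nat.cast_nonneg n)]; norm_num
  rw [hsq]
  have hterm : ∀ i : Fin n, (toE n (zround y) i - y i)^2 ≤ 1/4 := by
    intro i
    have h := round_abs_le (y i)
    have : |toE n (zround y) i - y i| ≤ 1/2 := by simpa [toE, zround] using h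
    nlinarith [abs_nonneg (toE n (zround y) i - y i), sq_abs (toE n (zround y) i - y i)]
  calc ∑ i, (toE n (zround y) i - y i)^2 ≤ ∑ _i : Fin n, (1/4:ℝ) :=
        Finset.sum_le_sum fun i _ => hterm i
  _ = (n:ℝ)/4 := by rw [Finset.sum_const, Finset.card_univ, Fintype.card_fin]; ring

lemma lattice_ball_finite (y : EuclideanSpace ℝ (Fin n)) (c : ℝ) :
    {z : Fin n → ℤ | dist (toE n z) y ≤ c}.Finite := by
  have hsub : {z : Fin n → ℤ | dist (toE n z) y ≤ c} ⊆
      Set.univ.pi (fun i => Set.Icc (⌈y i - c⌉) (⌊y i + c⌋)) := by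
    intro z hz i _
    have h := abs_coord_le_of_dist hz i
    have h2 : |(z i:ℝ) - y i| ≤ c := by simpa [toE] using h
    rw [abs_le] at h2
    exact ⟨Int.ceil_le.mpr (by linarith [h2.1]), Int.le_floor.mpr (by linarith [h2.2])⟩
  exact (Set.Finite.pi (fun i => Set.finite_Icc _ _)).subset hsub

lemma gap (y : EuclideanSpace ℝ (Fin n)) (b : ℝ) : ∃ δ : ℝ, 0 < δ ∧ δ ≤ 1/4 ∧
    ∀ z : Fin n → ℤ, dist (toE n z) y ≤ b + δ → dist (toE n z) y ≤ b := by
  classical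
  set T := (lattice_ball_finite y (b+1)).toFinset with hT
  set bad := T.filter (fun z => b < dist (toE n z) y) with hbad
  by_cases hem : bad.Nonempty
  · set m := bad.inf' hem (fun z => dist (toE n z) y) with hm
    have hmb : b < m := by
      obtain ⟨z0, hz0, hz0e⟩ := Finset.exists_mem_eq_inf' hem (fun z => dist (toE n z) y)
      rw [hm, hz0e]
      exact (Finset.mem_filter.mp hz0).2
    refine ⟨min (1/4) ((m - b)/2), lt_min (by norm_num) (by linarith), min_le_left _ _, ?_⟩
    intro z hz
    by_contra hgt
    push_neg at hgt
    have hzT : z ∈ T := by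
      rw [hT, Set.Finite.mem_toFinset]
      exact le_trans hz (by linarith [min_le_left (1/4:ℝ) ((m-b)/2)])
    have hzbad : z ∈ bad := Finset.mem_filter.mpr ⟨hzT, hgt⟩
    have h5 : m ≤ dist (toE n z) y := Finset.inf'_le _ hzbad
    have h6 : dist (toE n z) y ≤ b + (m - b)/2 :=
      le_trans hz (by linarith [min_le_right (1/4:ℝ) ((m-b)/2)])
    linarith
  · refine ⟨1/4, by norm_num, le_refl _, ?_⟩
    intro z hz
    by_contra hgt
    push_neg at hgt
    have hzT : z ∈ T := by rw [hT, Set.Finite.mem_toFinset]; exact le_trans hz (by norm_num)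
    exact hem ⟨z, Finset.mem_filter.mpr ⟨hzT, hgt⟩⟩

lemma seg {x y0 : EuclideanSpace ℝ (Fin n)} {r b : ℝ} (hb : 0 ≤ b) (hr : 0 ≤ r)
    (h : dist y0 x ≤ r + b) : ∃ y, dist y x ≤ r ∧ dist y0 y ≤ b := by
  by_cases hD : dist y0 x ≤ r
  · exact ⟨y0, hD, by simp [hb]⟩
  · push_neg at hD
    have hD0 : 0 < dist y0 x := lt_of_le_of_lt hr hD
    set D := dist y0 x with hDdef
    set t := r / D with ht
    have ht0 : 0 ≤ t := div_nonneg hr hD0.le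
    have ht1 : t ≤ 1 := by
      rw [ht, div_le_one hD0]; exact hD.le
    have hnorm : ‖y0 - x‖ = D := by rw [hDdef, dist_eq_norm]
    refine ⟨x + t • (y0 - x), ?_, ?_⟩
    · have h1 : x + t • (y0 - x) - x = t • (y0 - x) := add_sub_cancel_left x _
      rw [dist_eq_norm, h1, norm_smul, Real.norm_eq_abs, abs_of_nonneg ht0, hnorm, ht]
      rw [div_mul_cancel₀ r hD0.ne']
    · have h1 : y0 - (x + t • (y0 - x)) = (1 - t) • (y0 - x) := by
        rw [sub_smul, one_smul]; abel
      rw [dist_eq_norm, h1, norm_smul, Real.norm_eq_abs, abs_of_nonneg (by linarith), hnorm]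
      have : (1 - t) * D = D - r := by
        rw [ht]; field_simp
      linarith


abbrev Lab (n : ℕ) (b : ℝ) (S : Set (Fin n → ℤ)) (y : EuclideanSpace ℝ (Fin n))
    (z : Fin n → ℤ) : Prop :=
  dist (toE n z) y ≤ b ∨
    ((∀ w : Fin n → ℤ, ¬ dist (toE n w) y ≤ b) ∧
      (∀ i, z i = ⌊y i⌋ ∨ z i = ⌊y i⌋ + 1) ∧ z ∈ S)

lemma driver (n k : ℕ) (hn : 2 ≤ n) (hk : 1 ≤ n - k) (b r : ℝ) (hb : 0 < b)
    (hb2 : Real.sqrt ((n:ℝ) - 1) / 2 ≤ b) (hr : 0 < r)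
    (hd : (∀ y : EuclideanSpace ℝ (Fin n), ∃ z : Fin n → ℤ, dist (toE n z) y ≤ b) ∨ k = 0)
    (X : Set (EuclideanSpace ℝ (Fin n))) (hconn : IsConnected (offset n X r)) :
    kConn n k (disc n X (r + b)) := by
  classical
  intro p hp q hq
  set S := disc n X (r + b) with hSdef
  set step : (Fin n → ℤ) → (Fin n → ℤ) → Prop :=
    fun a c => a ∈ S ∧ c ∈ S ∧ kAdj n k a c with hstepdef
  show Relation.ReflTransGen step p q
  have hmemU : ∀ y, y ∈ offset n X r ↔ ∃ x ∈ X, dist y x ≤ r := by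
    intro y; simp [offset, Metric.mem_closedBall]
  have hmemS : ∀ z : Fin n → ℤ, z ∈ S ↔ ∃ x ∈ X, dist (toE n z) x ≤ r + b := by
    intro z; simp [hSdef, disc, offset, Metric.mem_closedBall]
  have hGS : ∀ y, y ∈ offset n X r → ∀ z : Fin n → ℤ, dist (toE n z) y ≤ b → z ∈ S := by
    intro y hy z hz
    obtain ⟨x, hxX, hyx⟩ := (hmemU y).mp hy
    exact (hmemS z).mpr ⟨x, hxX, (dist_triangle (toE n z) y x).trans (by linarith)⟩
  have hsymm : ∀ a c, Relation.ReflTransGen step a c → Relation.ReflTransGen step c a := by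
    have hs : Symmetric step := by
      rintro a c ⟨h1, h2, h3⟩; exact ⟨h2, h1, kAdj_symm h3⟩
    exact fun a c h => (@Relation.ReflTransGen.stdSymm _ _ ⟨fun a b h => hs h⟩).symm a c h
  have hgreedy : ∀ y, y ∈ offset n X r → ∀ a c : Fin n → ℤ,
      dist (toE n a) y ≤ b → dist (toE n c) y ≤ b → Relation.ReflTransGen step a c := by
    intro y hy a c ha hc
    have hpath := greedy (x := y) hk b _ a c rfl ha hc
    refine Relation.ReflTransGen.mono ?_ _ _ hpath
    rintro a' c' ⟨h1, h2, h3⟩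
    exact ⟨hGS y hy a' h1, hGS y hy c' h2, h3⟩
  have hcornerJ : k = 0 → ∀ (m z w : Fin n → ℤ), z ∈ S → w ∈ S →
      (∀ i, z i = m i ∨ z i = m i + 1) → (∀ i, w i = m i ∨ w i = m i + 1) →
      Relation.ReflTransGen step z w := by
    intro hk0 m z w hzS hwS hz hw
    by_cases hzw : z = w
    · subst hzw; exact .refl
    · refine Relation.ReflTransGen.single ⟨hzS, hwS, hzw, ?_, ?_⟩
      · intro i; rcases hz i with h | h <;> rcases hw i with h' | h' <;>
          simp [h, h'] <;> omega
      · subst hk0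
        calc (Finset.univ.filter (fun i => z i ≠ w i)).card
            ≤ (Finset.univ : Finset (Fin n)).card := Finset.card_filter_le _ _
        _ = n := by simp
        _ = n - 0 := (Nat.sub_zero n).symm
  -- wrappers for sums
  have hdistle : ∀ (z : Fin n → ℤ) (y : EuclideanSpace ℝ (Fin n)) (c : ℝ), 0 ≤ c →
      (∑ i, ((z i:ℝ) - y i)^2 ≤ c^2) → dist (toE n z) y ≤ c := by
    intro z y c h0 h
    exact dist_le_of_sum_sq h0 (by simpa [toE] using h)
  -- F points have no integer coordinates
  have hFnoint : ∀ y : EuclideanSpace ℝ (Fin n),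
      (∀ w : Fin n → ℤ, ¬ dist (toE n w) y ≤ b) →
      ∀ i, ((⌊y i⌋:ℝ) < y i ∧ y i < (⌊y i⌋:ℝ) + 1) := by
    intro y hF i
    have hnoint : ¬ ∃ c : ℤ, (c:ℝ) = y i := by
      rintro ⟨c, hc⟩
      apply hF (Function.update (zround y) i c)
      have hn1 : (0:ℝ) ≤ (n:ℝ) - 1 := by
        have h2 : (2:ℝ) ≤ (n:ℝ) := by exact_mod_cast hn
        linarith
      refine le_trans (hdistle _ y (Real.sqrt ((n:ℝ) - 1) / 2) (by positivity) ?_) hb2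
      have hsq : (Real.sqrt ((n:ℝ) - 1) / 2)^2 = ((n:ℝ) - 1)/4 := by
        rw [div_pow, Real.sq_sqrt hn1]; norm_num
      rw [hsq, update_sum_sq (x := y) (zround y) i c]
      have hz : ((c:ℝ) - y i)^2 = 0 := by rw [hc]; ring
      have hquarter : ∀ j : Fin n, (((zround y) j:ℝ) - y j)^2 ≤ 1/4 := by
        intro j
        have h2 : |((zround y) j:ℝ) - y j| ≤ |(1/2 : ℝ)| := by
          rw [abs_of_pos (by norm_num : (0:ℝ) < 1/2)]
          exact round_abs_le (y j)
        have h3 := sq_le_sq_of_abs h2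
        nlinarith [h3]
      have hsum : ∑ j ∈ Finset.univ.erase i, (((zround y) j:ℝ) - y j)^2 ≤ ((n:ℝ) - 1)/4 := by
        calc ∑ j ∈ Finset.univ.erase i, (((zround y) j:ℝ) - y j)^2
            ≤ ∑ _j ∈ Finset.univ.erase i, (1/4:ℝ) :=
              Finset.sum_le_sum fun j _ => hquarter j
        _ = ((Finset.univ.erase i).card : ℝ) * (1/4) := by rw [Finset.sum_const]; simp [nsmul_eq_mul]
        _ = ((n:ℝ) - 1)/4 := by
              rw [Finset.card_erase_of_mem (Finset.mem_univ i), Finset.card_univ, Fintype.card_fin]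
              rw [Nat.cast_sub (by omega)]
              push_cast; ring
      linarith
    constructor
    · rcases lt_or_eq_of_le (Int.floor_le (y i)) with h | h
      · exact h
      · exact absurd ⟨⌊y i⌋, h⟩ hnoint
    · exact Int.lt_floor_add_one (y i)

  have hL1 : ∀ y, y ∈ offset n X r → ∀ z z', Lab n b S y z → Lab n b S y z' →
      Relation.ReflTransGen step z z' := by
    intro y hy z z' hz hz'
    rcases hz with hz | ⟨hF, hzc, hzS⟩
    · rcases hz' with hz' | ⟨hF', _, _⟩
      · exact hgreedy y hy z z' hz hz'
      · exact absurd hz (hF' z)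
    · rcases hz' with hz' | ⟨_, hz'c, hz'S⟩
      · exact absurd hz' (hF z')
      · have hk0 : k = 0 := by
          rcases hd with hcov | hk0
          · obtain ⟨w, hw⟩ := hcov y; exact absurd hw (hF w)
          · exact hk0
        exact hcornerJ hk0 (fun i => ⌊y i⌋) z z' hzS hz'S hzc hz'c
  have hL2 : ∀ y, y ∈ offset n X r → ∃ δ : ℝ, 0 < δ ∧ ∀ y', y' ∈ offset n X r → dist y' y < δ →
      (∀ z', Lab n b S y' z' → ∃ z, Lab n b S y z ∧ Relation.ReflTransGen step z z') ∧
      (∀ z, Lab n b S y z → ∃ z', Lab n b S y' z' ∧ Relation.ReflTransGen step z z') := by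
    intro y hy
    obtain ⟨δ₁, hδ₁pos, hδ₁small, hδ₁gap⟩ := gap y b
    by_cases hyF : ∃ w : Fin n → ℤ, dist (toE n w) y ≤ b
    · obtain ⟨w₀, hw₀⟩ := hyF
      have hGw : dist (toE n (zround y)) y ≤ b := le_trans (zround_le_dist y w₀) hw₀
      have hwS : zround y ∈ S := hGS y hy _ hGw
      refine ⟨δ₁, hδ₁pos, ?_⟩
      intro y' hy' hnear
      have hcoord : ∀ i, |y' i - y i| ≤ dist y' y := fun i => abs_coord_le_of_dist (le_refl _) i
      by_cases hy'F : ∃ w' : Fin n → ℤ, dist (toE n w') y' ≤ b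
      · obtain ⟨w', hw'⟩ := hy'F
        have hGw' : dist (toE n (zround y')) y' ≤ b := le_trans (zround_le_dist y' w') hw'
        constructor
        · intro z' hz'
          rcases hz' with hz' | ⟨hF', _, _⟩
          · have h1 : dist (toE n z') y ≤ b + δ₁ :=
              le_trans (dist_triangle (toE n z') y' y) (by linarith [hnear.le])
            exact ⟨z', Or.inl (hδ₁gap z' h1), .refl⟩
          · exact absurd hw' (hF' w')
        · intro z hz
          rcases hz with hz | ⟨hF, _, _⟩
          · refine ⟨zround y', Or.inl hGw', ?_⟩
            have h1 : dist (toE n (zround y')) y ≤ b + δ₁ :=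
              le_trans (dist_triangle _ y' y) (by linarith [hnear.le])
            exact hgreedy y hy z _ hz (hδ₁gap _ h1)
          · exact absurd hw₀ (hF w₀)
      · simp only [not_exists] at hy'F
        have hk0 : k = 0 := by
          rcases hd with hcov | hk0
          · obtain ⟨w', hw'⟩ := hcov y'; exact absurd hw' (hy'F w')
          · exact hk0
        have hcorner : ∀ i, (zround y) i = ⌊y' i⌋ ∨ (zround y) i = ⌊y' i⌋ + 1 := by
          intro i
          have hci := hcoord i
          have h1 : (⌊y' i⌋:ℝ) ≤ y' i := Int.floor_le _
          have h2 : y' i < (⌊y' i⌋:ℝ) + 1 := Int.lt_floor_add_one _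
          have habs : |y' i - y i| ≤ δ₁ := le_trans hci hnear.le
          rw [abs_le] at habs
          show round (y i) = ⌊y' i⌋ ∨ round (y i) = ⌊y' i⌋ + 1
          rw [round_eq]
          have hlow : ⌊y' i⌋ ≤ ⌊y i + 1/2⌋ :=
            Int.le_floor.mpr (by linarith [habs.1, habs.2])
          have hhigh : ⌊y i + 1/2⌋ < ⌊y' i⌋ + 2 := by
            refine Int.floor_lt.mpr ?_
            push_cast
            linarith [habs.1, habs.2]
          omega
        constructor
        · intro z' hz'
          rcases hz' with hz' | ⟨_, hz'c, hz'S⟩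
          · exact absurd hz' (hy'F z')
          · exact ⟨zround y, Or.inl hGw,
              hcornerJ hk0 (fun i => ⌊y' i⌋) _ z' hwS hz'S hcorner hz'c⟩
        · intro z hz
          rcases hz with hz | ⟨hF, _, _⟩
          · exact ⟨zround y, Or.inr ⟨hy'F, hcorner, hwS⟩, hgreedy y hy z _ hz hGw⟩
          · exact absurd hw₀ (hF w₀)
    · simp only [not_exists] at hyF
      have hk0 : k = 0 := by
        rcases hd with hcov | hk0
        · obtain ⟨w, hw⟩ := hcov y; exact absurd hw (hyF w)
        · exact hk0
      have hstrict := hFnoint y hyF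
      have hne : (Finset.univ : Finset (Fin n)).Nonempty := ⟨⟨0, by omega⟩, Finset.mem_univ _⟩
      set δ₂ := Finset.univ.inf' hne (fun i => min (y i - (⌊y i⌋:ℝ)) ((⌊y i⌋:ℝ) + 1 - y i))
        with hδ₂def
      have hδ₂pos : 0 < δ₂ := by
        rw [hδ₂def, Finset.lt_inf'_iff]
        intro i _
        have h := hstrict i
        exact lt_min (by linarith [h.1]) (by linarith [h.2])
      refine ⟨min δ₂ (1/2), lt_min hδ₂pos (by norm_num), ?_⟩
      intro y' hy' hnear
      have hcell : ∀ i, (⌊y i⌋:ℝ) < y' i ∧ y' i < (⌊y i⌋:ℝ) + 1 := by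
        intro i
        have hci : |y' i - y i| ≤ dist y' y := abs_coord_le_of_dist (le_refl _) i
        have hlt : dist y' y < δ₂ := lt_of_lt_of_le hnear (min_le_left _ _)
        have h2 : δ₂ ≤ min (y i - (⌊y i⌋:ℝ)) ((⌊y i⌋:ℝ) + 1 - y i) := by
          rw [hδ₂def]
          exact Finset.inf'_le _ (Finset.mem_univ i)
        have h3 := min_le_left (y i - (⌊y i⌋:ℝ)) ((⌊y i⌋:ℝ) + 1 - y i)
        have h4 := min_le_right (y i - (⌊y i⌋:ℝ)) ((⌊y i⌋:ℝ) + 1 - y i)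
        rw [abs_le] at hci
        constructor
        · linarith [hci.1, hci.2]
        · linarith [hci.1, hci.2]
      have hfloor' : ∀ i, ⌊y' i⌋ = ⌊y i⌋ := by
        intro i
        rw [Int.floor_eq_iff]
        constructor
        · exact (hcell i).1.le
        · push_cast
          exact (hcell i).2
      by_cases hy'F : ∃ w' : Fin n → ℤ, dist (toE n w') y' ≤ b
      · obtain ⟨w', hw'⟩ := hy'F
        have hGw' : dist (toE n (zround y')) y' ≤ b := le_trans (zround_le_dist y' w') hw'
        have hw'S : zround y' ∈ S := hGS y' hy' _ hGw'
        have hw'c : ∀ i, (zround y') i = ⌊y i⌋ ∨ (zround y') i = ⌊y i⌋ + 1 := by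
          intro i
          show round (y' i) = ⌊y i⌋ ∨ round (y' i) = ⌊y i⌋ + 1
          rw [round_eq]
          have h1 := (hcell i).1
          have h2 := (hcell i).2
          have hlow : ⌊y i⌋ ≤ ⌊y' i + 1/2⌋ := Int.le_floor.mpr (by linarith)
          have hhigh : ⌊y' i + 1/2⌋ < ⌊y i⌋ + 2 := by
            refine Int.floor_lt.mpr ?_
            push_cast
            linarith
          omega
        constructor
        · intro z' hz'
          rcases hz' with hz' | ⟨hF', _, _⟩
          · exact ⟨zround y', Or.inr ⟨hyF, hw'c, hw'S⟩, hgreedy y' hy' _ z' hGw' hz'⟩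
          · exact absurd hw' (hF' w')
        · intro z hz
          rcases hz with hz | ⟨_, hzc, hzS⟩
          · exact absurd hz (hyF z)
          · exact ⟨zround y', Or.inl hGw', hcornerJ hk0 (fun i => ⌊y i⌋) z _ hzS hw'S hzc hw'c⟩
      · simp only [not_exists] at hy'F
        constructor
        · intro z' hz'
          rcases hz' with hz' | ⟨_, hz'c, hz'S⟩
          · exact absurd hz' (hy'F z')
          · refine ⟨z', Or.inr ⟨hyF, fun i => ?_, hz'S⟩, .refl⟩
            have h := hz'c i
            rw [hfloor' i] at h
            exact h
        · intro z hz
          rcases hz with hz | ⟨_, hzc, hzS⟩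
          · exact absurd hz (hyF z)
          · refine ⟨z, Or.inr ⟨hy'F, fun i => ?_, hzS⟩, .refl⟩
            rw [hfloor' i]
            exact hzc i
  -- endgame
  obtain ⟨xp, hxpX, hxp⟩ := (hmemS p).mp hp
  obtain ⟨yp, hypr, hypb⟩ := seg hb.le hr.le hxp
  have hypU : yp ∈ offset n X r := (hmemU yp).mpr ⟨xp, hxpX, hypr⟩
  obtain ⟨xq, hxqX, hxq⟩ := (hmemS q).mp hq
  obtain ⟨yq, hyqr, hyqb⟩ := seg hb.le hr.le hxq
  have hyqU : yq ∈ offset n X r := (hmemU yq).mpr ⟨xq, hxqX, hyqr⟩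
  by_contra hJpq
  have hchoice : ∀ y : EuclideanSpace ℝ (Fin n), ∃ δ : ℝ, 0 < δ ∧
      (y ∈ offset n X r → ∀ y', y' ∈ offset n X r → dist y' y < δ →
        (∀ z', Lab n b S y' z' → ∃ z, Lab n b S y z ∧ Relation.ReflTransGen step z z') ∧
        (∀ z, Lab n b S y z → ∃ z', Lab n b S y' z' ∧ Relation.ReflTransGen step z z')) := by
    intro y
    by_cases hyU : y ∈ offset n X r
    · obtain ⟨δ, h1, h2⟩ := hL2 y hyU
      exact ⟨δ, h1, fun _ => h2⟩
    · exact ⟨1, one_pos, fun h => absurd h hyU⟩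
  choose δf hδfpos hδf using hchoice
  set A := {y | y ∈ offset n X r ∧ ∃ z, Lab n b S y z ∧ Relation.ReflTransGen step p z}
    with hAdef
  set B := {y | y ∈ offset n X r ∧ ∀ z, Lab n b S y z → ¬ Relation.ReflTransGen step p z}
    with hBdef
  have hA'open : IsOpen (⋃ y ∈ A, Metric.ball y (δf y)) :=
    isOpen_biUnion fun _ _ => Metric.isOpen_ball
  have hB'open : IsOpen (⋃ y ∈ B, Metric.ball y (δf y)) :=
    isOpen_biUnion fun _ _ => Metric.isOpen_ball
  have hcover : offset n X r ⊆
      (⋃ y ∈ A, Metric.ball y (δf y)) ∪ (⋃ y ∈ B, Metric.ball y (δf y)) := by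
    intro y hy
    by_cases hA : ∃ z, Lab n b S y z ∧ Relation.ReflTransGen step p z
    · exact Or.inl (Set.mem_biUnion ⟨hy, hA⟩ (Metric.mem_ball_self (hδfpos y)))
    · push_neg at hA
      exact Or.inr (Set.mem_biUnion ⟨hy, hA⟩ (Metric.mem_ball_self (hδfpos y)))
  have hAne : (offset n X r ∩ ⋃ y ∈ A, Metric.ball y (δf y)).Nonempty := by
    refine ⟨yp, hypU, Set.mem_biUnion ?_ (Metric.mem_ball_self (hδfpos yp))⟩
    exact ⟨hypU, p, Or.inl hypb, .refl⟩
  have hBne : (offset n X r ∩ ⋃ y ∈ B, Metric.ball y (δf y)).Nonempty := by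
    refine ⟨yq, hyqU, Set.mem_biUnion ⟨hyqU, ?_⟩ (Metric.mem_ball_self (hδfpos yq))⟩
    intro z hz hJz
    apply hJpq
    exact hJz.trans (hL1 yq hyqU z q hz (Or.inl hyqb))
  have hint := hconn.isPreconnected _ _ hA'open hB'open hcover hAne hBne
  obtain ⟨w, hwU, hwA', hwB'⟩ := hint
  obtain ⟨ya, hyaA, hwa⟩ := Set.mem_iUnion₂.mp hwA'
  obtain ⟨yb, hybB, hwb⟩ := Set.mem_iUnion₂.mp hwB'
  obtain ⟨hyaU, za, hzaL, hzaJ⟩ := hyaA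
  obtain ⟨hybU, hBall⟩ := hybB
  have hwa' : dist w ya < δf ya := Metric.mem_ball.mp hwa
  have hwb' : dist w yb < δf yb := Metric.mem_ball.mp hwb
  obtain ⟨zw, hzwL, hzazw⟩ := (hδf ya hyaU w hwU hwa').2 za hzaL
  obtain ⟨zb, hzbL, hzbzw⟩ := (hδf yb hybU w hwU hwb').1 zw hzwL
  exact hBall zb hzbL (hzaJ.trans (hzazw.trans (hsymm _ _ hzbzw)))


end DP

/-- If `X ⊆ ℝ^n` (`n ≥ 2`) has a connected `r`-offset for some `r > 0`, then the
`(r + √n/2)`-offset discretization is `(n-1)`-connected and the `(r + √(n-1)/2)`-offset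
discretization is `0`-connected. -/
theorem disc_conn_of_offset_connected (n : ℕ) (hn : 2 ≤ n)
    (X : Set (EuclideanSpace ℝ (Fin n))) (r : ℝ) (hr : 0 < r)
    (hconn : IsConnected (offset n X r)) :
    kConn n (n - 1) (disc n X (r + Real.sqrt n / 2)) ∧
      kConn n 0 (disc n X (r + Real.sqrt (n - 1) / 2)) := by
  have h2 : (2:ℝ) ≤ (n:ℝ) := by exact_mod_cast hn
  have hs1 : (0:ℝ) < Real.sqrt n / 2 := by
    have : (0:ℝ) < Real.sqrt n := Real.sqrt_pos.mpr (by linarith)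
    linarith
  have hs2 : (0:ℝ) < Real.sqrt ((n:ℝ) - 1) / 2 := by
    have : (0:ℝ) < Real.sqrt ((n:ℝ) - 1) := Real.sqrt_pos.mpr (by linarith)
    linarith
  have hmono : Real.sqrt ((n:ℝ) - 1) / 2 ≤ Real.sqrt n / 2 := by
    have := Real.sqrt_le_sqrt (by linarith : (n:ℝ) - 1 ≤ (n:ℝ))
    linarith
  constructor
  · refine DP.driver n (n-1) hn (by omega) (Real.sqrt n / 2) r hs1 hmono hr ?_ X hconn
    left
    intro y
    exact ⟨DP.zround y, DP.zround_dist_le (by omega) y⟩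
  · exact DP.driver n 0 hn (by omega) (Real.sqrt ((n:ℝ) - 1) / 2) r hs2 (le_refl _) hr
      (Or.inr rfl) X hconn
end
end
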